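/- Suppose there is a unique quantile q with P(γ(X) > q) = μ where μ = E[γ(X)]. Then among all measurable classifiers h: X → {0,1} with E[h(X)] = μ, the quantile classifier h_q(x) = 1{γ(x) > q} minimizes the classification error P(C ≠ h(X)). -/
import Mathlib


open MeasureTheory

/-- among strength-calibrated classifiers (E[h(X)] = μ), the quantile
classifier h_q = 1{γ > q} minimizes classification error. -/
theorem quantile_classifier_optimal_among_calibrated
    {Ω 𝓧 : Type*} [MeasurableSpace Ω] [MeasurableSpace 𝓧]
    (P : Measure Ω) [IsProbabilityMeasure P]
    (X : Ω → 𝓧) (hX : Measurable X)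
    (γ : 𝓧 → ℝ) (hγ : Measurable γ) (hγ01 : ∀ x, γ x ∈ Set.Icc (0:ℝ) 1)
    (C : Ω → ℝ) (hC : Measurable C) (hCbin : ∀ ω, C ω = 0 ∨ C ω = 1)
    (hcond : ∀ B : Set 𝓧, MeasurableSet B →
      ∫ ω in X ⁻¹' B, C ω ∂P = ∫ ω in X ⁻¹' B, γ (X ω) ∂P)
    (μ q : ℝ) (hμ : μ = ∫ ω, γ (X ω) ∂P)
    (hq : P {ω | γ (X ω) > q} = ENNReal.ofReal μ)
    (h : 𝓧 → ℝ) (hh : Measurable h) (hhbin : ∀ x, h x = 0 ∨ h x = 1)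
    (hcal : ∫ ω, h (X ω) ∂P = μ) :
    P {ω | C ω ≠ (if γ (X ω) > q then (1:ℝ) else 0)}
      ≤ P {ω | C ω ≠ h (X ω)} := by
  classical
  set g : 𝓧 → ℝ := fun x => if γ x > q then 1 else 0 with hg_def
  have hg_meas : Measurable g := Measurable.ite (measurableSet_lt measurable_const hγ)
    measurable_const measurable_const
  have hg_bin : ∀ x, g x = 0 ∨ g x = 1 := by
    intro x; by_cases hx : γ x > q <;> simp [g, hx]
  -- integrability helper
  have ibdd : ∀ f : Ω → ℝ, Measurable f → (∀ ω, |f ω| ≤ 1) → Integrable f P := by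
    intro f hf hb
    exact Integrable.mono' (integrable_const 1) hf.aestronglyMeasurable
      (Filter.Eventually.of_forall (fun ω => by simpa using hb ω))
  have hCb : ∀ ω, |C ω| ≤ 1 := by
    intro ω; rcases hCbin ω with h' | h' <;> simp [h']
  have hγb : ∀ ω, |γ (X ω)| ≤ 1 := by
    intro ω; rw [abs_le]; constructor
    · linarith [(hγ01 (X ω)).1]
    · exact (hγ01 (X ω)).2
  have binb : ∀ (f : 𝓧 → ℝ), (∀ x, f x = 0 ∨ f x = 1) → ∀ ω, |f (X ω)| ≤ 1 := by
    intro f hf ω; rcases hf (X ω) with h' | h' <;> simp [h']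
  have int_C : Integrable C P := ibdd C hC hCb
  have int_γ : Integrable (fun ω => γ (X ω)) P := ibdd _ (hγ.comp hX) hγb
  -- generic error formula
  have key : ∀ f : 𝓧 → ℝ, Measurable f → (∀ x, f x = 0 ∨ f x = 1) →
      (P {ω | C ω ≠ f (X ω)}).toReal
        = μ + ∫ ω, f (X ω) ∂P - 2 * ∫ ω, γ (X ω) * f (X ω) ∂P := by
    intro f hf hfbin
    have hS : MeasurableSet {ω | C ω ≠ f (X ω)} :=
      (measurableSet_eq_fun hC (hf.comp hX)).compl
    have int_f : Integrable (fun ω => f (X ω)) P := ibdd _ (hf.comp hX) (binb f hfbin)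
    have int_Cf : Integrable (fun ω => C ω * f (X ω)) P := by
      refine ibdd _ (hC.mul (hf.comp hX)) (fun ω => ?_)
      rw [abs_mul]
      calc |C ω| * |f (X ω)| ≤ 1 * 1 :=
            mul_le_mul (hCb ω) (binb f hfbin ω) (abs_nonneg _) zero_le_one
        _ = 1 := by ring
    have int_γf : Integrable (fun ω => γ (X ω) * f (X ω)) P := by
      refine ibdd _ ((hγ.comp hX).mul (hf.comp hX)) (fun ω => ?_)
      rw [abs_mul]
      calc |γ (X ω)| * |f (X ω)| ≤ 1 * 1 :=
            mul_le_mul (hγb ω) (binb f hfbin ω) (abs_nonneg _) zero_le_one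
        _ = 1 := by ring
    -- ∫ C = μ
    have hCint : ∫ ω, C ω ∂P = μ := by
      have := hcond Set.univ MeasurableSet.univ
      simp only [Set.preimage_univ, Measure.restrict_univ] at this
      rw [this, hμ]
    -- ∫ C f∘X = ∫ γ∘X f∘X
    have hCf : ∫ ω, C ω * f (X ω) ∂P = ∫ ω, γ (X ω) * f (X ω) ∂P := by
      have hB : MeasurableSet {x | f x = 1} := measurableSet_eq_fun hf measurable_const
      have e1 : (fun ω => C ω * f (X ω)) = (X ⁻¹' {x | f x = 1}).indicator C := by
        funext ω
        rcases hfbin (X ω) with h' | h'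
        · rw [h', Set.indicator_of_notMem, mul_zero]
          simp [Set.mem_preimage, h']
        · rw [h', Set.indicator_of_mem, mul_one]
          exact h'
      have e2 : (fun ω => γ (X ω) * f (X ω))
          = (X ⁻¹' {x | f x = 1}).indicator (fun ω => γ (X ω)) := by
        funext ω
        rcases hfbin (X ω) with h' | h'
        · rw [h', Set.indicator_of_notMem, mul_zero]
          simp [Set.mem_preimage, h']
        · rw [h', Set.indicator_of_mem, mul_one]
          exact h'
      rw [e1, e2, integral_indicator (hX hB), integral_indicator (hX hB)]
      exact hcond _ hB
    -- indicator identity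
    have e0 : ({ω | C ω ≠ f (X ω)}).indicator (1 : Ω → ℝ)
        = fun ω => C ω + f (X ω) - 2 * (C ω * f (X ω)) := by
      funext ω
      rcases hCbin ω with h1 | h1 <;> rcases hfbin (X ω) with h2 | h2 <;>
        simp [Set.indicator_apply, Set.mem_setOf_eq, h1, h2] <;> norm_num
    have i1 : Integrable (fun ω => C ω + f (X ω)) P := int_C.add int_f
    have i2 : Integrable (fun ω => 2 * (C ω * f (X ω))) P := int_Cf.const_mul 2
    calc (P {ω | C ω ≠ f (X ω)}).toReal
        = ∫ ω, ({ω | C ω ≠ f (X ω)}).indicator (1 : Ω → ℝ) ω ∂P :=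
          (integral_indicator_one hS).symm
      _ = ∫ ω, C ω + f (X ω) - 2 * (C ω * f (X ω)) ∂P := by rw [e0]
      _ = (∫ ω, C ω ∂P) + (∫ ω, f (X ω) ∂P) - 2 * ∫ ω, C ω * f (X ω) ∂P := by
          rw [integral_sub i1 i2, integral_add int_C int_f, integral_const_mul]
      _ = μ + ∫ ω, f (X ω) ∂P - 2 * ∫ ω, γ (X ω) * f (X ω) ∂P := by rw [hCint, hCf]
  have hμ0 : 0 ≤ μ := by
    rw [hμ]; exact integral_nonneg (fun ω => (hγ01 (X ω)).1)
  -- ∫ g∘X = μ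
  have hSg : MeasurableSet {ω | γ (X ω) > q} := measurableSet_lt measurable_const (hγ.comp hX)
  have hg_int : ∫ ω, g (X ω) ∂P = μ := by
    have e : (fun ω => g (X ω)) = ({ω | γ (X ω) > q}).indicator (1 : Ω → ℝ) := by
      funext ω
      by_cases hx : γ (X ω) > q <;> simp [g, hx, Set.indicator_apply, Set.mem_setOf_eq]
    calc ∫ ω, g (X ω) ∂P
        = ∫ ω, ({ω | γ (X ω) > q}).indicator (1 : Ω → ℝ) ω ∂P := by rw [e]
      _ = (P {ω | γ (X ω) > q}).toReal := integral_indicator_one hSg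
      _ = μ := by rw [hq, ENNReal.toReal_ofReal hμ0]
  -- main inequality on ∫ γ f
  have int_γg : Integrable (fun ω => γ (X ω) * g (X ω)) P := by
    refine ibdd _ ((hγ.comp hX).mul (hg_meas.comp hX)) (fun ω => ?_)
    rw [abs_mul]
    calc |γ (X ω)| * |g (X ω)| ≤ 1 * 1 :=
          mul_le_mul (hγb ω) (binb g hg_bin ω) (abs_nonneg _) zero_le_one
      _ = 1 := by ring
  have int_γh : Integrable (fun ω => γ (X ω) * h (X ω)) P := by
    refine ibdd _ ((hγ.comp hX).mul (hh.comp hX)) (fun ω => ?_)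
    rw [abs_mul]
    calc |γ (X ω)| * |h (X ω)| ≤ 1 * 1 :=
          mul_le_mul (hγb ω) (binb h hhbin ω) (abs_nonneg _) zero_le_one
      _ = 1 := by ring
  have int_g : Integrable (fun ω => g (X ω)) P := ibdd _ (hg_meas.comp hX) (binb g hg_bin)
  have int_h : Integrable (fun ω => h (X ω)) P := ibdd _ (hh.comp hX) (binb h hhbin)
  have pt : ∀ ω, 0 ≤ (γ (X ω) - q) * (g (X ω) - h (X ω)) := by
    intro ω
    rcases hhbin (X ω) with h2 | h2 <;> by_cases hx : γ (X ω) > q <;>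
      simp only [g, hx, if_pos, if_neg, h2] <;> simp [h2, hx] <;> nlinarith
  have nn : 0 ≤ ∫ ω, (γ (X ω) - q) * (g (X ω) - h (X ω)) ∂P := integral_nonneg pt
  have expand : ∫ ω, (γ (X ω) - q) * (g (X ω) - h (X ω)) ∂P
      = (∫ ω, γ (X ω) * g (X ω) ∂P) - (∫ ω, γ (X ω) * h (X ω) ∂P)
        - q * (∫ ω, g (X ω) ∂P) + q * (∫ ω, h (X ω) ∂P) := by
    have e : (fun ω => (γ (X ω) - q) * (g (X ω) - h (X ω)))
        = fun ω => (γ (X ω) * g (X ω) - γ (X ω) * h (X ω))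
            - (q * g (X ω) - q * h (X ω)) := by
      funext ω; ring
    have i1 : Integrable (fun ω => γ (X ω) * g (X ω) - γ (X ω) * h (X ω)) P := int_γg.sub int_γh
    have i2 : Integrable (fun ω => q * g (X ω) - q * h (X ω)) P :=
      (int_g.const_mul q).sub (int_h.const_mul q)
    have i3 : Integrable (fun ω => q * g (X ω)) P := int_g.const_mul q
    have i4 : Integrable (fun ω => q * h (X ω)) P := int_h.const_mul q
    rw [e, integral_sub i1 i2, integral_sub int_γg int_γh, integral_sub i3 i4,
      integral_const_mul, integral_const_mul]
    ring
  have main : ∫ ω, γ (X ω) * h (X ω) ∂P ≤ ∫ ω, γ (X ω) * g (X ω) ∂P := by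
    rw [expand, hg_int, hcal] at nn; linarith
  have tr : (P {ω | C ω ≠ g (X ω)}).toReal ≤ (P {ω | C ω ≠ h (X ω)}).toReal := by
    rw [key g hg_meas hg_bin, key h hh hhbin, hg_int, hcal]; linarith
  have goal' : P {ω | C ω ≠ g (X ω)} ≤ P {ω | C ω ≠ h (X ω)} :=
    (ENNReal.toReal_le_toReal (measure_ne_top P _) (measure_ne_top P _)).mp tr
  exact goal'
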